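/- For integers 1 ≤ r ≤ s and n ≥ 2s+1, with A^r_s(n) := ((n-2s)/s) · C(n-r, n-s) · C(n-s-1, r-1), one has A^r_s(n) ≥ C(n-s-1, s). -/

import Mathlib

lemma Ars_key (r s n : ℕ) (hr : 1 ≤ r) (hrs : r ≤ s) (hn : 2 * s + 1 ≤ n) :
    (n - s - 1).choose s * s ≤
      (n - 2 * s) * ((n - r).choose (n - s) * (n - s - 1).choose (r - 1)) := by
  set m := n - s - 1 with hm
  have h1 : m.choose s * s = m.choose (s - 1) * (n - 2 * s) := by
    have := Nat.choose_succ_right_eq m (s - 1)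
    have e1 : s - 1 + 1 = s := by omega
    have e2 : m - (s - 1) = n - 2 * s := by omega
    rw [e1, e2] at this
    exact this
  have h2 : m.choose (s - 1) * (s - 1).choose (r - 1) =
      m.choose (r - 1) * (m - (r - 1)).choose (s - 1 - (r - 1)) :=
    Nat.choose_mul (by omega)
  have h3 : 1 ≤ (s - 1).choose (r - 1) := Nat.choose_pos (by omega)
  have h4 : m.choose (s - 1) ≤ m.choose (r - 1) * (m - (r - 1)).choose (s - 1 - (r - 1)) := by
    calc m.choose (s - 1) ≤ m.choose (s - 1) * (s - 1).choose (r - 1) :=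
          Nat.le_mul_of_pos_right _ h3
      _ = _ := h2
  have e3 : s - 1 - (r - 1) = s - r := by omega
  have e4 : m - (r - 1) ≤ n - r := by omega
  have h5 : (m - (r - 1)).choose (s - 1 - (r - 1)) ≤ (n - r).choose (n - s) := by
    rw [e3]
    calc (m - (r - 1)).choose (s - r) ≤ (n - r).choose (s - r) :=
          Nat.choose_le_choose _ e4
      _ = (n - r).choose (n - s) := by
          have : n - s = n - r - (s - r) := by omega
          rw [this, Nat.choose_symm (by omega)]
  calc m.choose s * s = m.choose (s - 1) * (n - 2 * s) := h1
    _ ≤ m.choose (r - 1) * (n - r).choose (n - s) * (n - 2 * s) := by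
        refine Nat.mul_le_mul_right _ ?_
        exact h4.trans (Nat.mul_le_mul_left _ h5)
    _ = (n - 2 * s) * ((n - r).choose (n - s) * m.choose (r - 1)) := by ring

/-- For `1 ≤ r ≤ s` and `n ≥ 2s+1`,
`((n-2s)/s) C(n-r, n-s) C(n-s-1, r-1) ≥ C(n-s-1, s)` (in `ℚ`). -/
theorem Ars_ge_choose (r s n : ℕ) (hr : 1 ≤ r) (hrs : r ≤ s)
    (hn : 2 * s + 1 ≤ n) :
    ((n - s - 1).choose s : ℚ) ≤
      ((n : ℚ) - 2 * (s : ℚ)) / (s : ℚ) * ((n - r).choose (n - s) : ℚ) *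
        ((n - s - 1).choose (r - 1) : ℚ) := by
  have hs : (0 : ℚ) < s := by exact_mod_cast (by omega : 0 < s)
  rw [div_mul_eq_mul_div, div_mul_eq_mul_div, le_div_iff₀ hs]
  have hcast : (n : ℚ) - 2 * (s : ℚ) = ((n - 2 * s : ℕ) : ℚ) := by
    rw [Nat.cast_sub (by omega : 2 * s ≤ n)]; push_cast; ring
  rw [hcast]
  have := Ars_key r s n hr hrs hn
  have : ((n - s - 1).choose s * s : ℚ) ≤
      ((n - 2 * s : ℕ) : ℚ) * (((n - r).choose (n - s) : ℚ) * ((n - s - 1).choose (r - 1) : ℚ)) := by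
    exact_mod_cast this
  linarith [this]
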